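/- arXiv:1506.04439 — 2 statements merged into one kernel-verified Lean document; each statement's English description precedes it below -/
import Mathlib

section
/- Let g be a continuous concave distortion function and assume Y* := sup_{t∈[0,T]} Y_t ∈ 𝒳_g. Let (τ^r_n)_{n∈ℕ} be a sequence of randomized stopping times in 𝒯^r such that (Y^r_{τ^r_n})_{n∈ℕ} converges in law to Y^r_{τ^r} for some τ^r ∈ 𝒯^r. Then lim_{n→∞} ℰ^g(Y^r_{τ^r_n}) = ℰ^g(Y^r_{τ^r}). -/
open MeasureTheory Set Filter

noncomputable section

namespace DistortedStopping

variable {Ω : Type*}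

/-- Distribution function of a real random variable under `P`. -/
def cdf {mΩ : MeasurableSpace Ω} (P : Measure Ω) (X : Ω → ℝ) (x : ℝ) : ℝ :=
  (P {ω | X ω ≤ x}).toReal

/-- Distorted expectation of a nonnegative random variable:
`ℰ^g(X) = ∫₀^∞ g(1 − F_X(x)) dx`. -/
def distExp {mΩ : MeasurableSpace Ω} (g : ℝ → ℝ) (P : Measure Ω) (X : Ω → ℝ) : ℝ :=
  ∫ x in Ioi (0:ℝ), g (1 - cdf P X x)

/-- Full distorted expectation (for possibly signed random variables). -/
def distExpFull {mΩ : MeasurableSpace Ω} (g : ℝ → ℝ) (P : Measure Ω) (X : Ω → ℝ) : ℝ :=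
  (∫ x in Ioi (0:ℝ), g (1 - cdf P X x)) - ∫ x in Iic (0:ℝ), (1 - g (1 - cdf P X x))

/-- `X ∈ 𝒳_g`, i.e. `∫₀^∞ g(1 − F_{|X|}(x)) dx < ∞`. -/
def MemXg {mΩ : MeasurableSpace Ω} (g : ℝ → ℝ) (P : Measure Ω) (X : Ω → ℝ) : Prop :=
  ∫⁻ x in Ioi (0:ℝ), ENNReal.ofReal (g (1 - cdf P (fun ω => |X ω|) x)) < ⊤

/-- `g` is a continuous concave distortion function. -/
def IsContConcaveDistortion (g : ℝ → ℝ) : Prop :=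
  g 0 = 0 ∧ g 1 = 1 ∧ MonotoneOn g (Icc 0 1) ∧ ContinuousOn g (Icc 0 1) ∧
    ConcaveOn ℝ (Icc 0 1) g

/-- `μ` is the probability measure `μ_g` on `(0,1]` associated with the continuous concave
distortion function `g`, characterized by `g'(x) = ∫_{(x,1]} (1/u) μ(du)` for `x ∈ (0,1)`,
`g'` being the right-sided derivative. -/
def IsDistortionMeasure (g : ℝ → ℝ) (μ : Measure ℝ) : Prop :=
  IsProbabilityMeasure μ ∧ μ (Ioc (0:ℝ) 1)ᶜ = 0 ∧
    ∀ x ∈ Ioo (0:ℝ) 1, derivWithin g (Ioi x) x = ∫ u in Ioc x 1, 1 / u ∂μ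

/-- `L¹₊(μ)`: nonnegative Borel `μ`-integrable functions on `(0,1]`. -/
def L1plus (μ : Measure ℝ) : Set (ℝ → ℝ) :=
  {Z | Measurable Z ∧ (∀ α ∈ Ioc (0:ℝ) 1, 0 ≤ Z α) ∧ Integrable Z μ}

/-- `{Z ∈ L¹₊(μ) : Z(1) = 0}`. -/
def L1plus0 (μ : Measure ℝ) : Set (ℝ → ℝ) := {Z | Z ∈ L1plus μ ∧ Z 1 = 0}

/-- `∫_{(0,1]} ((v − Z(α))⁺/α + Z(α)) μ(dα)`. -/
def Uval (μ : Measure ℝ) (Z : ℝ → ℝ) (v : ℝ) : ℝ :=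
  ∫ α in Ioc (0:ℝ) 1, (max (v - Z α) 0 / α + Z α) ∂μ

/-- `L¹[Y*, μ]`. -/
def L1Ystar {mΩ : MeasurableSpace Ω} (P : Measure Ω) (μ : Measure ℝ) (Ystar : Ω → ℝ) :
    Set (ℝ → ℝ) :=
  {Z | Z ∈ L1plus0 μ ∧
    ∫⁻ ω, ∫⁻ α in Ioc (0:ℝ) 1, ENNReal.ofReal (max (Ystar ω - Z α) 0 / α) ∂μ ∂P < ⊤}

/-- `L¹₊(μ, Z°)`: those `Z ∈ L¹₊(μ)` with `Z(1) = 0` dominating `Z°` near `0`. -/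
def L1plusRel (μ : Measure ℝ) (Zo : ℝ → ℝ) : Set (ℝ → ℝ) :=
  {Z | Z ∈ L1plus μ ∧ Z 1 = 0 ∧ ∃ a ∈ Ioo (0:ℝ) 1, ∀ α ∈ Ioc (0:ℝ) a, Zo α ≤ Z α}

/-- `𝓛*_𝒵(μ, Z°) = {1_{(0,a]}·Z° + Z : Z ∈ 𝒵, a ∈ (0,1)}`. -/
def Lstar (Zo : ℝ → ℝ) (𝒵 : Set (ℝ → ℝ)) : Set (ℝ → ℝ) :=
  {W | ∃ Z ∈ 𝒵, ∃ a ∈ Ioo (0:ℝ) 1, W = fun α => (Ioc (0:ℝ) a).indicator Zo α + Z α}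

/-- The set `𝒯` of stopping times with values in `[0, T]`. -/
def StopTimes {mΩ : MeasurableSpace Ω} (ℱ : Filtration ℝ mΩ) (T : ℝ) : Set (Ω → ℝ) :=
  {τ | IsStoppingTime ℱ (fun ω => (τ ω : WithTop ℝ)) ∧ ∀ ω, τ ω ∈ Icc 0 T}

/-- `𝒵` is a dense subset of `S` w.r.t. the `L¹(μ)`-norm. -/
def DenseL1 (μ : Measure ℝ) (𝒵 S : Set (ℝ → ℝ)) : Prop :=
  𝒵 ⊆ S ∧ ∀ Z ∈ S, ∀ ε > 0, ∃ W ∈ 𝒵, ∫ α in Ioc (0:ℝ) 1, |W α - Z α| ∂μ < ε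

/-- The probability space `(Ω, m, P|_m)` is atomless. -/
def AtomlessOn {mΩ : MeasurableSpace Ω} (P : Measure Ω) (m : MeasurableSpace Ω) : Prop :=
  ∀ A : Set Ω, MeasurableSet[m] A → 0 < P A →
    ∃ B ⊆ A, MeasurableSet[m] B ∧ 0 < P B ∧ P B < P A

/-- Standing assumptions on the filtered probability space: `0 < T < ∞`,
right-continuous filtration, `𝓕₀` contains only events of probability `0` or `1`
and all `P`-null sets. -/
structure FilteredSetup {mΩ : MeasurableSpace Ω} (P : Measure Ω) (ℱ : Filtration ℝ mΩ)
    (T : ℝ) : Prop where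
  posT : 0 < T
  rightCont : ∀ t : ℝ, (ℱ t : MeasurableSpace Ω) = ⨅ (s : ℝ) (_ : t < s), (ℱ s : MeasurableSpace Ω)
  trivial0 : ∀ A : Set Ω, MeasurableSet[ℱ 0] A → P A = 0 ∨ P A = 1
  null0 : ∀ A : Set Ω, MeasurableSet A → P A = 0 → MeasurableSet[ℱ 0] A

/-- Standing assumptions on the reward process: right-continuous, nonnegative,
adapted, with bounded paths on `[0,T]`. -/
structure ProcessSetup {mΩ : MeasurableSpace Ω} (P : Measure Ω) (ℱ : Filtration ℝ mΩ)
    (T : ℝ) (Y : ℝ → Ω → ℝ) : Prop where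
  adapted : Adapted ℱ Y
  rightCont : ∀ ω, ∀ t : ℝ, ContinuousWithinAt (fun s => Y s ω) (Ici t) t
  nonneg : ∀ t ω, 0 ≤ Y t ω
  bddPaths : ∀ ω, ∃ C : ℝ, ∀ t ∈ Icc (0:ℝ) T, Y t ω ≤ C

/-- `(Ω, 𝓕_t, P|_{𝓕_t})` is atomless with countably generated `𝓕_t` for every `t > 0`. -/
def AtomlessCountGen {mΩ : MeasurableSpace Ω} (P : Measure Ω) (ℱ : Filtration ℝ mΩ) : Prop :=
  ∀ t : ℝ, 0 < t → AtomlessOn P (ℱ t) ∧ @MeasurableSpace.CountablyGenerated Ω (ℱ t)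

/-- `Y* = sup_{t ∈ [0,T]} Y_t`. -/
def Ysup (T : ℝ) (Y : ℝ → Ω → ℝ) (ω : Ω) : ℝ := ⨆ t : Icc (0:ℝ) T, Y t ω

/-- The optimal value `sup_{τ ∈ 𝒯} ℰ^g(Y_τ)`. -/
def stopVal {mΩ : MeasurableSpace Ω} (g : ℝ → ℝ) (P : Measure Ω) (ℱ : Filtration ℝ mΩ)
    (T : ℝ) (Y : ℝ → Ω → ℝ) : ℝ :=
  sSup ((fun τ => distExp g P (fun ω => Y (τ ω) ω)) '' StopTimes ℱ T)

/-- `sup_{τ ∈ 𝒯} E[U^{g,Z}_τ]`. -/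
def UexpVal {mΩ : MeasurableSpace Ω} (P : Measure Ω) (μ : Measure ℝ) (ℱ : Filtration ℝ mΩ)
    (T : ℝ) (Y : ℝ → Ω → ℝ) (Z : ℝ → ℝ) : ℝ :=
  sSup ((fun τ => ∫ ω, Uval μ Z (Y (τ ω) ω) ∂P) '' StopTimes ℱ T)


/-- Left-continuous quantile function of a distribution function `F`. -/
def leftQuantile (F : ℝ → ℝ) (β : ℝ) : ℝ := sInf {x : ℝ | β ≤ F x}

/-- Bernstein basis polynomial `B_{i,n}(α) = C(n,i) α^i (1−α)^{n−i}`. -/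
def bern (n i : ℕ) (α : ℝ) : ℝ := (n.choose i : ℝ) * α ^ i * (1 - α) ^ (n - i)

/-- `𝒵_B`: Bernstein polynomials `Σ_{i=0}^{n−1} b_i B_{i,n}` with nonnegative coefficients. -/
def ZBset : Set (ℝ → ℝ) :=
  {Z | ∃ n : ℕ, 0 < n ∧ ∃ b : ℕ → ℝ, (∀ i < n, 0 ≤ b i) ∧
    Z = fun α => ∑ i ∈ Finset.range n, b i * bern n i α}

/-- `𝒵_B^δ`: as `𝒵_B` but with `b₀ ≥ δ`. -/
def ZBdelta (δ : ℝ) : Set (ℝ → ℝ) :=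
  {Z | ∃ n : ℕ, 0 < n ∧ ∃ b : ℕ → ℝ, δ ≤ b 0 ∧ (∀ i < n, 0 ≤ b i) ∧
    Z = fun α => ∑ i ∈ Finset.range n, b i * bern n i α}

/-- A randomized stopping time bounded by `T`: nondecreasing and left-continuous in the
second (randomization) component, a stopping time in the first one. -/
def IsRandomizedST {mΩ : MeasurableSpace Ω} (ℱ : Filtration ℝ mΩ) (T : ℝ)
    (τ : Ω → ℝ → ℝ) : Prop :=
  (∀ ω, MonotoneOn (τ ω) (Icc 0 1)) ∧
  (∀ ω, ∀ u ∈ Ioc (0:ℝ) 1, ContinuousWithinAt (τ ω) (Iio u) u) ∧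
  (∀ u ∈ Icc (0:ℝ) 1, IsStoppingTime ℱ (fun ω => τ ω u)) ∧
  (∀ ω, ∀ u ∈ Icc (0:ℝ) 1, τ ω u ∈ Icc 0 T)

/-- The uniform distribution `P^U` on `[0,1]`. -/
def PU : Measure ℝ := volume.restrict (Icc (0:ℝ) 1)

/-- `Y^r_{τ^r}(ω, u) = Y_{τ^r(ω,u)}(ω)` on `Ω × [0,1]`. -/
def Yrand (Y : ℝ → Ω → ℝ) (τ : Ω → ℝ → ℝ) : Ω × ℝ → ℝ := fun p => Y (τ p.1 p.2) p.1

/-- Quasi-left-continuity of the process `(Y_t)`. -/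
def QuasiLeftCont {mΩ : MeasurableSpace Ω} (P : Measure Ω) (ℱ : Filtration ℝ mΩ)
    (Y : ℝ → Ω → ℝ) : Prop :=
  ∀ (σ : ℕ → Ω → ℝ) (σ' : Ω → ℝ), (∀ n, IsStoppingTime ℱ (fun ω => (σ n ω : WithTop ℝ))) →
    IsStoppingTime ℱ (fun ω => (σ' ω : WithTop ℝ)) →
    (∀ ω, Monotone fun n => σ n ω) →
    (∀ ω, Tendsto (fun n => σ n ω) atTop (nhds (σ' ω))) →
    ∀ᵐ ω ∂P, Tendsto (fun n => Y (σ n ω) ω) atTop (nhds (Y (σ' ω) ω))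

/-- The set `𝓜₀` of right-continuous martingales on `[0,T]` with `M₀ = 0` and
`sup_{t∈[0,T]} |M_t| ∈ L¹`. Martingale property is stated on `[0,T]` via conditional
expectations. -/
def MartSet {mΩ : MeasurableSpace Ω} (P : Measure Ω) (ℱ : Filtration ℝ mΩ) (T : ℝ) :
    Set (ℝ → Ω → ℝ) :=
  {M | (∀ t ∈ Icc (0:ℝ) T, StronglyMeasurable[ℱ t] (M t)) ∧
    (∀ t ∈ Icc (0:ℝ) T, Integrable (M t) P) ∧
    (∀ s ∈ Icc (0:ℝ) T, ∀ t ∈ Icc (0:ℝ) T, s ≤ t → P[M t|ℱ s] =ᵐ[P] M s) ∧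
    (∀ ω, ∀ t : ℝ, ContinuousWithinAt (fun s => M s ω) (Ici t) t) ∧
    (∀ᵐ ω ∂P, M 0 ω = 0) ∧
    Integrable (fun ω => ⨆ t : Icc (0:ℝ) T, |M (↑t) ω|) P}

/-- A law-invariant coherent risk measure `ρ` on a solid vector space `𝒳` of integrable
random variables containing the essentially bounded ones. -/
structure CoherentRM {mΩ : MeasurableSpace Ω} (P : Measure Ω) (𝒳 : Set (Ω → ℝ))
    (ρ : (Ω → ℝ) → ℝ) : Prop where
  memLinfty : ∀ X : Ω → ℝ, Measurable X → (∃ C : ℝ, ∀ᵐ ω ∂P, |X ω| ≤ C) → X ∈ 𝒳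
  memL1 : ∀ X ∈ 𝒳, Integrable X P
  addMem : ∀ X ∈ 𝒳, ∀ X' ∈ 𝒳, (fun ω => X ω + X' ω) ∈ 𝒳
  smulMem : ∀ (c : ℝ), ∀ X ∈ 𝒳, (fun ω => c * X ω) ∈ 𝒳
  absMem : ∀ X ∈ 𝒳, (fun ω => |X ω|) ∈ 𝒳
  solid : ∀ X : Ω → ℝ, Integrable X P → ∀ X' ∈ 𝒳,
    (∀ᵐ ω ∂P, |X ω| ≤ |X' ω|) → X ∈ 𝒳
  mono : ∀ X ∈ 𝒳, ∀ X' ∈ 𝒳, (∀ᵐ ω ∂P, X' ω ≤ X ω) →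
    ρ X' ≤ ρ X
  sublin : ∀ X ∈ 𝒳, ∀ X' ∈ 𝒳, ∀ a b : ℝ, 0 ≤ a → 0 ≤ b →
    ρ (fun ω => a * X ω + b * X' ω) ≤ a * ρ X + b * ρ X'
  transl : ∀ X ∈ 𝒳, ∀ a : ℝ, ρ (fun ω => X ω + a) = ρ X + a
  cutoff : ∀ X ∈ 𝒳, (∀ᵐ ω ∂P, 0 ≤ X ω) →
    Tendsto (fun k : ℕ => ρ (fun ω => max (X ω - k) 0)) atTop (nhds 0)
  lawInv : ∀ X ∈ 𝒳, ∀ X' ∈ 𝒳,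
    (∀ x : ℝ, (P {ω | X ω ≤ x}).toReal = (P {ω | X' ω ≤ x}).toReal) → ρ X = ρ X'

/-! ### Auxiliary lemmas for Statement 16 -/

theorem cdf_mono' {mΩ : MeasurableSpace Ω} (P : Measure Ω) [IsFiniteMeasure P] (X : Ω → ℝ) :
    Monotone (cdf P X) := fun a b hab =>
  ENNReal.toReal_mono (measure_ne_top P _) (measure_mono fun ω h => le_trans h hab)

theorem cdf_mem_Icc' {mΩ : MeasurableSpace Ω} (P : Measure Ω) [IsProbabilityMeasure P]
    (X : Ω → ℝ) (x : ℝ) : cdf P X x ∈ Icc (0:ℝ) 1 :=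
  ⟨ENNReal.toReal_nonneg, by
    simpa [cdf] using ENNReal.toReal_mono ENNReal.one_ne_top (prob_le_one (μ := P))⟩

instance : IsProbabilityMeasure PU :=
  ⟨by simp [PU, Real.volume_Icc]⟩

theorem Ysup_nonneg' {mΩ : MeasurableSpace Ω} {P : Measure Ω} {ℱ : Filtration ℝ mΩ} {T : ℝ}
    {Y : ℝ → Ω → ℝ} (hProc : ProcessSetup P ℱ T Y) (ω : Ω) : 0 ≤ Ysup T Y ω :=
  Real.iSup_nonneg fun t => hProc.nonneg t ω

/-- The cdf of `Y^r_σ` dominates the cdf of `Y*` for every randomized stopping time `σ`. -/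
theorem cdf_Ysup_le_cdf_Yrand {mΩ : MeasurableSpace Ω} (P : Measure Ω) [IsProbabilityMeasure P]
    (ℱ : Filtration ℝ mΩ) (T : ℝ) (Y : ℝ → Ω → ℝ) (hProc : ProcessSetup P ℱ T Y)
    (σ : Ω → ℝ → ℝ) (hσ : IsRandomizedST ℱ T σ) (x : ℝ) :
    cdf P (Ysup T Y) x ≤ cdf (P.prod PU) (Yrand Y σ) x := by
  have hsub : ({ω | Ysup T Y ω ≤ x} ×ˢ Icc (0:ℝ) 1) ⊆ {p : Ω × ℝ | Yrand Y σ p ≤ x} := by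
    rintro ⟨ω, u⟩ ⟨h1, h2⟩
    have hτm : σ ω u ∈ Icc 0 T := hσ.2.2.2 ω u h2
    have hbdd : BddAbove (Set.range fun t : Icc (0:ℝ) T => Y t ω) := by
      obtain ⟨C, hC⟩ := hProc.bddPaths ω
      exact ⟨C, by rintro _ ⟨t, rfl⟩; exact hC t t.2⟩
    have hle : Y (σ ω u) ω ≤ Ysup T Y ω := le_ciSup hbdd ⟨σ ω u, hτm⟩
    exact hle.trans h1
  have hPU : PU (Icc (0:ℝ) 1) = 1 := by
    simp [PU, Measure.restrict_apply measurableSet_Icc, Real.volume_Icc]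
  calc cdf P (Ysup T Y) x
      = ((P.prod PU) ({ω | Ysup T Y ω ≤ x} ×ˢ Icc (0:ℝ) 1)).toReal := by
        rw [Measure.prod_prod, hPU, mul_one]; rfl
    _ ≤ cdf (P.prod PU) (Yrand Y σ) x :=
        ENNReal.toReal_mono (measure_ne_top _ _) (measure_mono hsub)

/-- Lemma: continuity of `ℰ^g` along convergence in law: if `Y* ∈ 𝒳_g` and
`(Y^r_{τ^r_n})` converges in law to `Y^r_{τ^r}` (pointwise convergence of the distribution
functions at all continuity points of the limit), then
`ℰ^g(Y^r_{τ^r_n}) → ℰ^g(Y^r_{τ^r})`. -/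
theorem distorted_expectation_convergence_in_law
    {mΩ : MeasurableSpace Ω} (P : Measure Ω) [IsProbabilityMeasure P]
    (ℱ : Filtration ℝ mΩ) (T : ℝ) (Y : ℝ → Ω → ℝ)
    (hFil : FilteredSetup P ℱ T) (hProc : ProcessSetup P ℱ T Y)
    (g : ℝ → ℝ) (hg : IsContConcaveDistortion g)
    (hYstar : MemXg g P (Ysup T Y))
    (τs : ℕ → Ω → ℝ → ℝ) (hτs : ∀ n, IsRandomizedST ℱ T (τs n))
    (τ : Ω → ℝ → ℝ) (hτ : IsRandomizedST ℱ T τ)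
    (hlaw : ∀ x : ℝ, ContinuousAt (cdf (P.prod PU) (Yrand Y τ)) x →
      Tendsto (fun n => cdf (P.prod PU) (Yrand Y (τs n)) x) atTop
        (nhds (cdf (P.prod PU) (Yrand Y τ) x))) :
    Tendsto (fun n => distExp g (P.prod PU) (Yrand Y (τs n))) atTop
      (nhds (distExp g (P.prod PU) (Yrand Y τ))) := by
  obtain ⟨hg0, hg1, hgmono, hgcont, _⟩ := hg
  -- clamp onto `[0,1]` and the continuous extension of `g`
  set c : ℝ → ℝ := fun y => max 0 (min y 1) with hc
  have hcmem : ∀ y, c y ∈ Icc (0:ℝ) 1 :=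
    fun y => ⟨le_max_left _ _, max_le zero_le_one (min_le_right _ _)⟩
  have hceq : ∀ y ∈ Icc (0:ℝ) 1, c y = y := fun y hy => by
    simp only [hc, min_eq_left hy.2, max_eq_right hy.1]
  have hGcont : Continuous (fun y => g (c y)) :=
    hgcont.comp_continuous (continuous_const.max (continuous_id.min continuous_const)) hcmem
  have hgnn : ∀ y ∈ Icc (0:ℝ) 1, 0 ≤ g y := fun y hy => by
    have := hgmono (left_mem_Icc.2 zero_le_one) hy hy.1
    rwa [hg0] at this
  -- the cdfs involved
  set F : ℕ → ℝ → ℝ := fun n x => cdf (P.prod PU) (Yrand Y (τs n)) x with hF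
  set Flim : ℝ → ℝ := fun x => cdf (P.prod PU) (Yrand Y τ) x with hFinf
  set H : ℝ → ℝ := fun x => cdf P (Ysup T Y) x with hH
  have hFmem : ∀ n x, F n x ∈ Icc (0:ℝ) 1 := fun n x => cdf_mem_Icc' _ _ x
  have hFinfmem : ∀ x, Flim x ∈ Icc (0:ℝ) 1 := fun x => cdf_mem_Icc' _ _ x
  have hHmem : ∀ x, H x ∈ Icc (0:ℝ) 1 := fun x => cdf_mem_Icc' _ _ x
  have hsubmem : ∀ y : ℝ, y ∈ Icc (0:ℝ) 1 → (1 - y) ∈ Icc (0:ℝ) 1 := fun y hy =>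
    ⟨by linarith [hy.2], by linarith [hy.1]⟩
  -- domination
  have hdom : ∀ n x, H x ≤ F n x := fun n x =>
    cdf_Ysup_le_cdf_Yrand P ℱ T Y hProc (τs n) (hτs n) x
  -- measurability of the integrands
  have hmeasF : ∀ n, Measurable fun x => g (1 - F n x) := by
    intro n
    have h1 : Measurable fun x => (1 : ℝ) - F n x :=
      measurable_const.sub (cdf_mono' (P.prod PU) (Yrand Y (τs n))).measurable
    have : Measurable fun x => g (c (1 - F n x)) := hGcont.measurable.comp h1
    convert this using 2 with x
    rw [hceq _ (hsubmem _ (hFmem n x))]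
  have hmeasH : Measurable fun x => g (1 - H x) := by
    have h1 : Measurable fun x => (1 : ℝ) - H x :=
      measurable_const.sub (cdf_mono' P (Ysup T Y)).measurable
    have : Measurable fun x => g (c (1 - H x)) := hGcont.measurable.comp h1
    convert this using 2 with x
    rw [hceq _ (hsubmem _ (hHmem x))]
  -- nonnegativity of integrands
  have hnnF : ∀ n x, 0 ≤ g (1 - F n x) := fun n x => hgnn _ (hsubmem _ (hFmem n x))
  have hnnH : ∀ x, 0 ≤ g (1 - H x) := fun x => hgnn _ (hsubmem _ (hHmem x))
  -- the dominating function is integrable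
  have hHI : Integrable (fun x => g (1 - H x)) (volume.restrict (Ioi (0:ℝ))) := by
    refine ⟨hmeasH.aestronglyMeasurable, ?_⟩
    rw [hasFiniteIntegral_iff_ofReal (ae_of_all _ hnnH)]
    have habs : (fun ω => |Ysup T Y ω|) = Ysup T Y := by
      funext ω; exact abs_of_nonneg (Ysup_nonneg' hProc ω)
    have := hYstar
    rw [MemXg, habs] at this
    exact this
  -- a.e. pointwise convergence
  have hae : ∀ᵐ x ∂(volume.restrict (Ioi (0:ℝ))),
      Tendsto (fun n => g (1 - F n x)) atTop (nhds (g (1 - Flim x))) := by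
    have hd : Set.Countable {x : ℝ | ¬ ContinuousAt Flim x} :=
      (cdf_mono' (P.prod PU) (Yrand Y τ)).countable_not_continuousAt
    have hd0 : volume.restrict (Ioi (0:ℝ)) {x : ℝ | ¬ ContinuousAt Flim x} = 0 := by
      have h1 : volume {x : ℝ | ¬ ContinuousAt Flim x} = 0 := hd.measure_zero volume
      exact le_antisymm (le_trans (Measure.restrict_le_self _) h1.le) zero_le
    filter_upwards [measure_eq_zero_iff_ae_notMem.1 hd0] with x hx
    have hcont : ContinuousAt Flim x := not_not.1 hx
    have h1 : Tendsto (fun n => F n x) atTop (nhds (Flim x)) := hlaw x hcont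
    have h2 : Tendsto (fun n => (1 : ℝ) - F n x) atTop (nhds (1 - Flim x)) :=
      tendsto_const_nhds.sub h1
    have h3 : Tendsto (fun n => g (c (1 - F n x))) atTop (nhds (g (c (1 - Flim x)))) :=
      (hGcont.continuousAt.tendsto).comp h2
    have e1 : ∀ n, g (c (1 - F n x)) = g (1 - F n x) := fun n => by
      rw [hceq _ (hsubmem _ (hFmem n x))]
    have e2 : g (c (1 - Flim x)) = g (1 - Flim x) := by
      rw [hceq _ (hsubmem _ (hFinfmem x))]
    simpa only [e1, e2] using h3
  -- bound
  have hbound : ∀ n, ∀ᵐ x ∂(volume.restrict (Ioi (0:ℝ))),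
      ‖g (1 - F n x)‖ ≤ g (1 - H x) := by
    intro n
    refine ae_of_all _ fun x => ?_
    rw [Real.norm_eq_abs, abs_of_nonneg (hnnF n x)]
    exact hgmono (hsubmem _ (hFmem n x)) (hsubmem _ (hHmem x)) (by linarith [hdom n x])
  -- conclude by dominated convergence
  have := tendsto_integral_of_dominated_convergence (μ := volume.restrict (Ioi (0:ℝ)))
    (F := fun n x => g (1 - F n x)) (f := fun x => g (1 - Flim x))
    (bound := fun x => g (1 - H x))
    (fun n => (hmeasF n).aestronglyMeasurable) hHI hbound hae
  simpa only [distExp] using this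

end DistortedStopping
end
end

section
/- Let μ be a probability measure on the Borel σ-algebra of (0,1], and let 𝒵_B consist of all functions of the form Σ_{i=0}^{n−1} b_i B_{i,n} restricted to (0,1], with n ∈ ℕ and b₀,…,b_{n−1} ≥ 0, where B_{i,n}(α) = C(n,i) α^i (1−α)^{n−i}. Then 𝒵_B is dense in {Z ∈ L¹₊(μ) : Z(1) = 0} with respect to the L¹(μ)-norm: for every nonnegative μ-integrable Borel function Z on (0,1] with Z(1)=0 and every ε > 0, there exists φ ∈ 𝒵_B with ∫_{(0,1]} |φ − Z| dμ < ε. -/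
open MeasureTheory Set Filter

noncomputable section

namespace DistortedStopping

variable {Ω : Type*}

private lemma clamp_abs_le {a c k : ℝ} (h0 : 0 ≤ c) (hk : c ≤ k) :
    |min (max a 0) k - c| ≤ |a - c| := by
  rcases le_total a 0 with h | h
  · rw [max_eq_right h, min_eq_left (h0.trans hk), zero_sub, abs_neg, abs_of_nonneg h0]
    linarith [neg_le_abs (a - c)]
  · rcases le_total a k with h' | h'
    · rw [max_eq_left h, min_eq_left h']
    · rw [max_eq_left h, min_eq_right h', abs_of_nonneg (by linarith)]
      linarith [le_abs_self (a - c)]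

/-- the Bernstein polynomials with nonnegative coefficients and vanishing
top coefficient are dense in `{Z ∈ L¹₊(μ) : Z(1) = 0}` w.r.t. the `L¹(μ)`-norm. -/
theorem bernstein_dense_L1
    (μ : Measure ℝ) [IsProbabilityMeasure μ] (hsupp : μ (Ioc (0:ℝ) 1)ᶜ = 0)
    (Z : ℝ → ℝ) (hZmeas : Measurable Z) (hZnonneg : ∀ α ∈ Ioc (0:ℝ) 1, 0 ≤ Z α)
    (hZint : Integrable Z μ) (hZ1 : Z 1 = 0) :
    ∀ ε > 0, ∃ φ ∈ ZBset, ∫ α in Ioc (0:ℝ) 1, |φ α - Z α| ∂μ < ε := by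
  intro ε hε
  set ν := μ.restrict (Ioc (0:ℝ) 1) with hν
  have hνuniv : (ν univ).toReal ≤ 1 := by
    rw [hν, Measure.restrict_apply_univ]
    exact ENNReal.toReal_le_of_le_ofReal one_pos.le (by simpa using prob_le_one)
  have hZint' : Integrable Z ν := hZint.restrict
  -- Step 1: truncation
  have htrunc : Tendsto (fun k : ℕ => ∫ α, |min (Z α) k - Z α| ∂ν) atTop (nhds 0) := by
    have h0 : (0:ℝ) = ∫ _α, (0:ℝ) ∂ν := by simp
    rw [h0]
    apply tendsto_integral_of_dominated_convergence (fun α => |Z α|)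
    · exact fun n => ((hZmeas.min measurable_const).sub hZmeas).abs.aestronglyMeasurable
    · exact hZint'.abs
    · intro n
      filter_upwards [ae_restrict_mem measurableSet_Ioc] with α hα
      have hZ0 := hZnonneg α hα
      rw [Real.norm_eq_abs, abs_abs, abs_sub_comm,
        abs_of_nonneg (sub_nonneg.2 (min_le_left _ _))]
      have : 0 ≤ min (Z α) (n:ℝ) := le_min hZ0 (Nat.cast_nonneg n)
      linarith [le_abs_self (Z α)]
    · refine ae_of_all _ fun α => ?_
      obtain ⟨N, hN⟩ := exists_nat_ge (Z α)
      have hev : (fun n : ℕ => |min (Z α) (n:ℝ) - Z α|) =ᶠ[atTop] (fun _ => (0:ℝ)) := by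
        filter_upwards [eventually_ge_atTop N] with n hn
        rw [min_eq_left (hN.trans (Nat.cast_le.2 hn)), sub_self, abs_zero]
      exact Tendsto.congr' hev.symm tendsto_const_nhds
  obtain ⟨k, hk⟩ := (htrunc.eventually_lt_const (by positivity : (0:ℝ) < ε/4)).exists
  set Zk : ℝ → ℝ := fun α => min (Z α) (k:ℝ) with hZkdef
  have hZk1 : Zk 1 = 0 := by simp [hZkdef, hZ1]
  have hZkint : Integrable Zk ν := by
    refine (hZint'.abs.add (integrable_const (k:ℝ))).mono'
      ((hZmeas.min measurable_const).aestronglyMeasurable) (ae_of_all _ fun α => ?_)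
    rw [Real.norm_eq_abs]
    refine (abs_min_le_max_abs_abs).trans (max_le (le_add_of_nonneg_right (Nat.cast_nonneg k))
      ?_)
    rw [abs_of_nonneg (Nat.cast_nonneg k)]
    exact le_add_of_nonneg_left (abs_nonneg _)
  -- Step 2: continuous approximation
  obtain ⟨h, -, hh, hhcont, hhint⟩ :=
    hZkint.exists_hasCompactSupport_integral_sub_le (by positivity : (0:ℝ) < ε/4)
  set g : ℝ → ℝ := fun x => min (max (h x) 0) (k:ℝ) with hgdef
  have hgcont : Continuous g := (hhcont.max continuous_const).min continuous_const
  have hg0 : ∀ x, 0 ≤ g x := fun x => le_min (le_max_right _ _) (Nat.cast_nonneg k)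
  have hgk : ∀ x, g x ≤ (k:ℝ) := fun x => min_le_right _ _
  have hgint : Integrable g ν := hgcont.integrableOn_Ioc
  have hgZk : Integrable (fun α => |g α - Zk α|) ν := (hgint.sub hZkint).abs
  have hg_close : ∫ α, |g α - Zk α| ∂ν ≤ ε/4 := by
    refine le_trans ?_ hh
    refine integral_mono_of_nonneg (ae_of_all _ fun α => abs_nonneg _)
      (hZkint.sub hhint).norm ?_
    filter_upwards [ae_restrict_mem measurableSet_Ioc] with α hα
    have h1 : 0 ≤ Zk α := le_min (hZnonneg α hα) (Nat.cast_nonneg k)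
    have h2 : Zk α ≤ (k:ℝ) := min_le_right _ _
    rw [Real.norm_eq_abs, abs_sub_comm (Zk α)]
    exact clamp_abs_le h1 h2
  -- Step 3: cutoff near 1
  have hIempty : (⋂ m : ℕ, Ioo (1 - 1/(m+1) : ℝ) 1) = ∅ := by
    ext x
    simp only [mem_iInter, mem_Ioo, mem_empty_iff_false, iff_false, not_forall]
    by_cases hx : x < 1
    · obtain ⟨m, hm⟩ := exists_nat_one_div_lt (by linarith : (0:ℝ) < 1 - x)
      exact ⟨m, fun hc => absurd hc.1 (by push_cast; linarith)⟩
    · exact ⟨0, fun hc => hx hc.2⟩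
  have hmeas_tend : Tendsto (fun m : ℕ => (k:ℝ) * (ν (Ioo (1 - 1/(m+1) : ℝ) 1)).toReal)
      atTop (nhds 0) := by
    have h1 : Tendsto (fun m : ℕ => ν (Ioo (1 - 1/(m+1) : ℝ) 1)) atTop (nhds 0) := by
      have hmono : Antitone (fun m : ℕ => Ioo (1 - 1/(m+1) : ℝ) 1) := by
        intro i j hij
        refine Ioo_subset_Ioo ?_ le_rfl
        have hij' : (i:ℝ) + 1 ≤ (j:ℝ) + 1 := by exact_mod_cast Nat.succ_le_succ hij
        have : (1:ℝ)/(j+1) ≤ 1/(i+1) := one_div_le_one_div_of_le (by positivity) hij'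
        linarith
      have h2 := tendsto_measure_iInter_atTop (μ := ν) (s := fun m : ℕ => Ioo (1 - 1/(m+1) : ℝ) 1)
        (fun m => measurableSet_Ioo.nullMeasurableSet) hmono ⟨0, measure_ne_top _ _⟩
      rw [hIempty, measure_empty] at h2
      exact h2
    have h2 : Tendsto (fun m : ℕ => (ν (Ioo (1 - 1/(m+1) : ℝ) 1)).toReal) atTop (nhds 0) := by
      simpa [Function.comp_def] using (ENNReal.tendsto_toReal (a := 0) (by simp)).comp h1
    simpa using h2.const_mul (k:ℝ)
  obtain ⟨m, hm⟩ := (hmeas_tend.eventually_lt_const (by positivity : (0:ℝ) < ε/4)).exists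
  set δ : ℝ := 1/(m+1) with hδdef
  have hδpos : 0 < δ := by positivity
  set χ : ℝ → ℝ := fun x => min 1 (max ((1 - x)/δ) 0) with hχdef
  have hχcont : Continuous χ :=
    continuous_const.min (((continuous_const.sub continuous_id).div_const δ).max continuous_const)
  have hχ01 : ∀ x, 0 ≤ χ x ∧ χ x ≤ 1 := fun x =>
    ⟨le_min one_pos.le (le_max_right _ _), min_le_left _ _⟩
  have hχ1 : χ 1 = 0 := by simp [hχdef]
  set f : ℝ → ℝ := fun x => g x * χ x with hfdef
  have hfcont : Continuous f := hgcont.mul hχcont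
  have hf0 : ∀ x, 0 ≤ f x := fun x => mul_nonneg (hg0 x) (hχ01 x).1
  have hf1 : f 1 = 0 := by simp only [hfdef, hχ1, mul_zero]
  have hfint : Integrable f ν := hfcont.integrableOn_Ioc
  have hptwise : ∀ α ∈ Ioc (0:ℝ) 1,
      |f α - Zk α| ≤ |g α - Zk α| + (Ioo (1-δ) 1).indicator (fun _ => (k:ℝ)) α := by
    intro α hα
    rcases lt_or_eq_of_le hα.2 with hα1 | hα1
    · rcases le_or_gt α (1 - δ) with hle | hlt
      · have hind : (Ioo (1-δ) 1).indicator (fun _ => (k:ℝ)) α = 0 :=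
          indicator_of_notMem (fun hc => absurd (mem_Ioo.mp hc).1 (not_lt.2 hle)) _
        have hχα : χ α = 1 := by
          have h1δ : (1:ℝ) ≤ (1 - α)/δ := (le_div_iff₀ hδpos).2 (by linarith)
          rw [hχdef]
          simp only
          rw [max_eq_left (le_trans zero_le_one h1δ), min_eq_left h1δ]
        have hfg : f α = g α := by rw [hfdef]; simp only; rw [hχα, mul_one]
        rw [hfg, hind, add_zero]
      · have hind : (Ioo (1-δ) 1).indicator (fun _ => (k:ℝ)) α = k :=
          indicator_of_mem (mem_Ioo.mpr ⟨hlt, hα1⟩) _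
        rw [hind]
        have h1 : |f α - g α| ≤ (k:ℝ) := by
          rw [hfdef]
          simp only
          rw [show g α * χ α - g α = -(g α * (1 - χ α)) by ring, abs_neg,
            abs_of_nonneg (mul_nonneg (hg0 α) (by linarith [(hχ01 α).2]))]
          calc g α * (1 - χ α) ≤ (k:ℝ) * 1 :=
                mul_le_mul (hgk α) (by linarith [(hχ01 α).1]) (by linarith [(hχ01 α).2])
                  (Nat.cast_nonneg k)
            _ = k := mul_one _
        linarith [abs_sub_le (f α) (g α) (Zk α)]
    · subst hα1
      rw [hf1, hZk1, sub_zero, abs_zero]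
      exact add_nonneg (abs_nonneg _) (indicator_nonneg (fun _ _ => Nat.cast_nonneg k) _)
  have hf_close : ∫ α, |f α - Zk α| ∂ν < ε/2 := by
    have hint2 : Integrable ((Ioo (1-δ) 1).indicator (fun _ => (k:ℝ))) ν :=
      (integrable_const _).indicator measurableSet_Ioo
    have step : ∫ α, |f α - Zk α| ∂ν ≤
        ∫ α, (|g α - Zk α| + (Ioo (1-δ) 1).indicator (fun _ => (k:ℝ)) α) ∂ν := by
      refine integral_mono_of_nonneg (ae_of_all _ fun α => abs_nonneg _)
        (hgZk.add hint2) ?_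
      filter_upwards [ae_restrict_mem measurableSet_Ioc] with α hα
      exact hptwise α hα
    have hsplit : ∫ α, (|g α - Zk α| + (Ioo (1-δ) 1).indicator (fun _ => (k:ℝ)) α) ∂ν
        = (∫ α, |g α - Zk α| ∂ν) + (ν (Ioo (1-δ) 1)).toReal • (k:ℝ) := by
      rw [integral_add hgZk hint2, integral_indicator_const _ measurableSet_Ioo]
      rfl
    rw [hsplit, smul_eq_mul, mul_comm] at step
    linarith
  -- Step 4: Bernstein approximation
  set fC : C(unitInterval, ℝ) := ⟨fun x => f x.1, hfcont.comp continuous_subtype_val⟩ with hfC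
  obtain ⟨N, hN⟩ := Metric.tendsto_atTop.mp (bernsteinApproximation_uniform fC) (ε/4)
    (by positivity)
  set n := max N 1 with hndef
  have hn1 : 0 < n := lt_of_lt_of_le one_pos (le_max_right _ _)
  have hndist : ‖bernsteinApproximation n fC - fC‖ < ε/4 := by
    have := hN n (le_max_left _ _)
    rwa [dist_eq_norm] at this
  set φ : ℝ → ℝ := fun α => ∑ i ∈ Finset.range n, f ((i:ℝ)/n) * bern n i α with hφdef
  have hφmem : φ ∈ ZBset := ⟨n, hn1, fun i => f ((i:ℝ)/n), fun i _ => hf0 _, rfl⟩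
  have hφcont : Continuous φ := by
    apply continuous_finset_sum
    intro i _
    exact continuous_const.mul ((continuous_const.mul (continuous_pow i)).mul
      ((continuous_const.sub continuous_id).pow _))
  have hkey : ∀ α ∈ Ioc (0:ℝ) 1, |φ α - f α| ≤ ε/4 := by
    intro α hα
    have hαI : α ∈ unitInterval := ⟨hα.1.le, hα.2⟩
    have heq : φ α = bernsteinApproximation n fC ⟨α, hαI⟩ := by
      rw [bernsteinApproximation.apply]
      have hb : ∀ i : Fin (n+1), bernstein n i ⟨α, hαI⟩ • fC (bernstein.z i)
          = f ((i:ℝ)/n) * bern n i α := by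
        intro i
        rw [smul_eq_mul, mul_comm, bernstein_apply]
        simp only [hfC, bernstein.z, ContinuousMap.coe_mk, bern]
      rw [Finset.sum_congr rfl (fun i _ => hb i), Fin.sum_univ_eq_sum_range
        (fun i => f ((i:ℝ)/n) * bern n i α), Finset.sum_range_succ]
      have hnn : ((n:ℝ))/n = 1 := div_self (Nat.cast_ne_zero.2 hn1.ne')
      rw [hφdef]
      simp only
      rw [hnn, hf1, zero_mul, add_zero]
    have habs : |φ α - f α| = ‖(bernsteinApproximation n fC - fC) ⟨α, hαI⟩‖ := by
      rw [heq]
      simp [hfC, Real.norm_eq_abs]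
    rw [habs]
    exact (ContinuousMap.norm_coe_le_norm _ _).trans hndist.le
  have hφint : Integrable φ ν := hφcont.integrableOn_Ioc
  -- Final assembly
  refine ⟨φ, hφmem, ?_⟩
  have I1 : Integrable (fun α => |φ α - f α|) ν := (hφint.sub hfint).abs
  have I2 : Integrable (fun α => |f α - Zk α|) ν := (hfint.sub hZkint).abs
  have I3 : Integrable (fun α => |Zk α - Z α|) ν := (hZkint.sub hZint').abs
  have I12 : Integrable (fun α => |φ α - f α| + |f α - Zk α|) ν := I1.add I2
  have hA : ∫ α, |φ α - f α| ∂ν ≤ ε/4 := by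
    have hle : ∫ α, |φ α - f α| ∂ν ≤ ∫ _α, (ε/4 : ℝ) ∂ν := by
      refine integral_mono_of_nonneg (ae_of_all _ fun α => abs_nonneg _)
        (integrable_const _) ?_
      filter_upwards [ae_restrict_mem measurableSet_Ioc] with α hα
      exact hkey α hα
    rw [integral_const, smul_eq_mul] at hle
    rw [Measure.real] at hle
    nlinarith [ENNReal.toReal_nonneg (a := ν univ)]
  calc ∫ α, |φ α - Z α| ∂ν
      ≤ ∫ α, (|φ α - f α| + |f α - Zk α| + |Zk α - Z α|) ∂ν := by
        refine integral_mono_of_nonneg (ae_of_all _ fun α => abs_nonneg _) (I12.add I3) ?_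
        refine ae_of_all _ fun α => ?_
        calc |φ α - Z α| ≤ |φ α - Zk α| + |Zk α - Z α| := abs_sub_le _ _ _
          _ ≤ |φ α - f α| + |f α - Zk α| + |Zk α - Z α| := by
              linarith [abs_sub_le (φ α) (f α) (Zk α)]
    _ = (∫ α, (|φ α - f α| + |f α - Zk α|) ∂ν) + ∫ α, |Zk α - Z α| ∂ν := integral_add I12 I3
    _ = (∫ α, |φ α - f α| ∂ν) + (∫ α, |f α - Zk α| ∂ν) + ∫ α, |Zk α - Z α| ∂ν := by
        rw [integral_add I1 I2]
    _ < ε := by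
        have hZkZ : ∫ α, |Zk α - Z α| ∂ν < ε/4 := hk
        linarith

end DistortedStopping
end
end
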